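/- Let G = A × B × C with A = (ℤ/2)², B = ℤ/4, C = ℤ/3. Let π₁ be the faithful permutation representation of G given by left multiplication on the disjoint union of the coset spaces G/A and G/(B×C) (a set of 12 + 4 = 16 points), and let π₂ be the faithful permutation representation of G given by left multiplication on the disjoint union of G/B and G/(A×C) (also 16 points). Then the permutation polytopes P(π₁) and P(π₂) are affinely equivalent, but (G, π₁) and (G, π₂) are not effectively equivalent; that is, there is no automorphism φ of G such that Π₁ and Π₂ ∘ φ are stably equivalent. -/

import Mathlib

open Finset
open scoped Classical

/-- The permutation matrix of `σ ∈ Sym(α)`: entry `(i,j)` is `1` if `i = σ j`, else `0`. -/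
noncomputable def permMat {α : Type} (σ : Equiv.Perm α) : Matrix α α ℝ :=
  Matrix.of fun i j => if i = σ j then 1 else 0

lemma permMat_one {α : Type} : permMat (1 : Equiv.Perm α) = 1 := by
  ext i j; simp [permMat, Matrix.one_apply]; congr

lemma permMat_mul {α : Type} [Fintype α] (σ τ : Equiv.Perm α) :
    permMat (σ * τ) = permMat σ * permMat τ := by
  ext i j
  simp only [permMat, Matrix.mul_apply, Matrix.of_apply, Equiv.Perm.mul_apply]
  rw [Finset.sum_eq_single (τ j)]
  · simp; congr
  · intro k _ hk; simp [hk]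
  · simp

/-- The matrix representation induced by a permutation representation, on `ℝ^α`. -/
noncomputable def permRep {α : Type} [Fintype α] {G : Type} [Group G]
    (π : G →* Equiv.Perm α) : Representation ℝ G (α → ℝ) where
  toFun g := (permMat (π g)).mulVecLin
  map_one' := by simp [permMat_one]; rfl
  map_mul' g h := by simp [permMat_mul]; rfl

variable {G : Type} [Group G] [Fintype G]

/-- The affine kernel `ker°ρ` of a real representation `ρ` of `G`. -/
def affKer {V : Type} [AddCommGroup V] [Module ℝ V]
    (ρ : Representation ℝ G V) : Set (G → ℝ) :=
  {l | (∑ g : G, l g • (ρ g : V →ₗ[ℝ] V)) = 0 ∧ (∑ g : G, l g) = 0}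

/-- Direct sum (realized on the product space) of two representations. -/
def prodRep {V W : Type} [AddCommGroup V] [Module ℝ V] [AddCommGroup W] [Module ℝ W]
    (ρ : Representation ℝ G V) (σ : Representation ℝ G W) :
    Representation ℝ G (V × W) where
  toFun g := (ρ g).prodMap (σ g)
  map_one' := by ext <;> simp
  map_mul' g h := by ext <;> simp

/-- Isomorphism of `G`-representations. -/
def RepIso {V W : Type} [AddCommGroup V] [Module ℝ V] [AddCommGroup W] [Module ℝ W]
    (ρ : Representation ℝ G V) (σ : Representation ℝ G W) : Prop :=
  ∃ e : V ≃ₗ[ℝ] W, ∀ (g : G) (v : V), e (ρ g v) = σ g (e v)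

/-- Stable equivalence of real representations. -/
def StablyEquivalent {V W : Type} [AddCommGroup V] [Module ℝ V] [AddCommGroup W] [Module ℝ W]
    (ρ₁ : Representation ℝ G V) (ρ₂ : Representation ℝ G W) : Prop :=
  ∃ (V' : Type) (_ : AddCommGroup V') (_ : Module ℝ V') (ρ₁' : Representation ℝ G V')
    (W' : Type) (_ : AddCommGroup W') (_ : Module ℝ W') (ρ₂' : Representation ℝ G W'),
    affKer ρ₁ ⊆ affKer ρ₁' ∧ affKer ρ₂ ⊆ affKer ρ₂' ∧
    RepIso (prodRep ρ₁ ρ₁') (prodRep ρ₂ ρ₂')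

/-- Affine equivalence of polytopes `P ⊆ E₁` and `Q ⊆ E₂`. -/
def AffinelyEquivalent {E₁ E₂ : Type} [AddCommGroup E₁] [Module ℝ E₁]
    [AddCommGroup E₂] [Module ℝ E₂] (P : Set E₁) (Q : Set E₂) : Prop :=
  ∃ (f : E₁ →ᵃ[ℝ] E₂) (g : E₂ →ᵃ[ℝ] E₁),
    f '' P = Q ∧
    (∀ x ∈ affineSpan ℝ P, g (f x) = x) ∧
    (∀ y ∈ affineSpan ℝ Q, f (g y) = y)

/-- The group `G = A × B × C` with `A = (ℤ/2)²`, `B = ℤ/4`, `C = ℤ/3`. -/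
abbrev GEx : Type := Multiplicative ((ZMod 2 × ZMod 2) × ZMod 4 × ZMod 3)

/-- The factor `A = (ℤ/2)²` as a subgroup of `G`. -/
def subA : Subgroup GEx :=
  AddSubgroup.toSubgroup
    ((⊤ : AddSubgroup (ZMod 2 × ZMod 2)).prod (⊥ : AddSubgroup (ZMod 4 × ZMod 3)))

/-- The factor `B × C = ℤ/4 × ℤ/3` as a subgroup of `G`. -/
def subBC : Subgroup GEx :=
  AddSubgroup.toSubgroup
    ((⊥ : AddSubgroup (ZMod 2 × ZMod 2)).prod (⊤ : AddSubgroup (ZMod 4 × ZMod 3)))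

/-- The factor `B = ℤ/4` as a subgroup of `G`. -/
def subB : Subgroup GEx :=
  AddSubgroup.toSubgroup
    ((⊥ : AddSubgroup (ZMod 2 × ZMod 2)).prod
      ((⊤ : AddSubgroup (ZMod 4)).prod (⊥ : AddSubgroup (ZMod 3))))

/-- The subgroup `A × C = (ℤ/2)² × ℤ/3` of `G`. -/
def subAC : Subgroup GEx :=
  AddSubgroup.toSubgroup
    ((⊤ : AddSubgroup (ZMod 2 × ZMod 2)).prod
      ((⊥ : AddSubgroup (ZMod 4)).prod (⊤ : AddSubgroup (ZMod 3))))

/-- `π₁` : `G` acting by left multiplication on the disjoint union `G/A ⊔ G/(B×C)`. -/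
noncomputable def piOne : GEx →* Equiv.Perm ((GEx ⧸ subA) ⊕ (GEx ⧸ subBC)) :=
  (Equiv.Perm.sumCongrHom (GEx ⧸ subA) (GEx ⧸ subBC)).comp
    ((MulAction.toPermHom GEx (GEx ⧸ subA)).prod (MulAction.toPermHom GEx (GEx ⧸ subBC)))

/-- `π₂` : `G` acting by left multiplication on the disjoint union `G/B ⊔ G/(A×C)`. -/
noncomputable def piTwo : GEx →* Equiv.Perm ((GEx ⧸ subB) ⊕ (GEx ⧸ subAC)) :=
  (Equiv.Perm.sumCongrHom (GEx ⧸ subB) (GEx ⧸ subAC)).comp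
    ((MulAction.toPermHom GEx (GEx ⧸ subB)).prod (MulAction.toPermHom GEx (GEx ⧸ subAC)))

/-! ### Auxiliary machinery -/

section AuxGeneric

/-- Factor a linear map through another with smaller kernel. -/
lemma exists_factor {U V W : Type} [AddCommGroup U] [Module ℝ U]
    [AddCommGroup V] [Module ℝ V] [AddCommGroup W] [Module ℝ W]
    (T : U →ₗ[ℝ] V) (S : U →ₗ[ℝ] W) (hker : LinearMap.ker T ≤ LinearMap.ker S) :
    ∃ f : V →ₗ[ℝ] W, ∀ c, f (T c) = S c := by
  obtain ⟨q, hq⟩ := (LinearMap.range T).exists_isCompl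
  refine ⟨(Submodule.liftQ (LinearMap.ker T) S hker).comp
    ((T.quotKerEquivRange.symm.toLinearMap).comp
      (Submodule.linearProjOfIsCompl _ q hq)), fun c => ?_⟩
  have h1 : Submodule.linearProjOfIsCompl _ q hq (T c)
      = ⟨T c, LinearMap.mem_range_self T c⟩ :=
    Submodule.linearProjOfIsCompl_apply_left hq ⟨T c, LinearMap.mem_range_self T c⟩
  simp only [LinearMap.comp_apply, h1, LinearEquiv.coe_coe]
  rw [LinearMap.quotKerEquivRange_symm_apply_image]
  simp [Submodule.mkQ_apply]

/-- The linear "combination" map `c ↦ ∑ i, c i • v i`. -/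
def comboMap {ι V : Type} [Fintype ι] [AddCommGroup V] [Module ℝ V] (v : ι → V) :
    (ι → ℝ) →ₗ[ℝ] V where
  toFun c := ∑ i, c i • v i
  map_add' c d := by simp [add_smul, Finset.sum_add_distrib]
  map_smul' r c := by simp [mul_smul, Finset.smul_sum]

lemma comboMap_single {ι V : Type} [Fintype ι] [AddCommGroup V] [Module ℝ V]
    (v : ι → V) (i : ι) : comboMap v (Pi.single i 1) = v i := by
  simp [comboMap, Pi.single_apply, ite_smul]

/-- If two families have the same linear dependencies, their convex hulls are
affinely equivalent. -/
lemma affinelyEquivalent_of_ker_eq {ι V W : Type} [Fintype ι]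
    [AddCommGroup V] [Module ℝ V] [AddCommGroup W] [Module ℝ W]
    (v : ι → V) (w : ι → W)
    (h : ∀ c : ι → ℝ, (∑ i, c i • v i) = 0 ↔ (∑ i, c i • w i) = 0) :
    AffinelyEquivalent (convexHull ℝ (Set.range v)) (convexHull ℝ (Set.range w)) := by
  obtain ⟨f, hf⟩ := exists_factor (comboMap v) (comboMap w)
    (fun c hc => by
      simp only [LinearMap.mem_ker, comboMap, LinearMap.coe_mk, AddHom.coe_mk] at *
      exact (h c).1 hc)
  obtain ⟨g, hg⟩ := exists_factor (comboMap w) (comboMap v)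
    (fun c hc => by
      simp only [LinearMap.mem_ker, comboMap, LinearMap.coe_mk, AddHom.coe_mk] at *
      exact (h c).2 hc)
  have hfv : ∀ i, f (v i) = w i := by
    intro i
    rw [← comboMap_single v i, hf, comboMap_single]
  have hgw : ∀ i, g (w i) = v i := by
    intro i
    rw [← comboMap_single w i, hg, comboMap_single]
  have hspanv : ∀ x ∈ affineSpan ℝ (Set.range v), x ∈ Submodule.span ℝ (Set.range v) := by
    intro x hx
    have hle : affineSpan ℝ (Set.range v)
        ≤ (Submodule.span ℝ (Set.range v)).toAffineSubspace := by
      rw [affineSpan_le]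
      exact Submodule.subset_span
    exact hle hx
  have hspanw : ∀ x ∈ affineSpan ℝ (Set.range w), x ∈ Submodule.span ℝ (Set.range w) := by
    intro x hx
    have hle : affineSpan ℝ (Set.range w)
        ≤ (Submodule.span ℝ (Set.range w)).toAffineSubspace := by
      rw [affineSpan_le]
      exact Submodule.subset_span
    exact hle hx
  refine ⟨f.toAffineMap, g.toAffineMap, ?_, ?_, ?_⟩
  · show ⇑f '' _ = _
    rw [f.image_convexHull]
    congr 1
    rw [← Set.range_comp]
    exact congrArg Set.range (funext hfv)
  · intro x hx
    rw [affineSpan_convexHull] at hx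
    have hx' := hspanv x hx
    have heq : Set.EqOn ⇑(g.comp f) ⇑(LinearMap.id (R := ℝ) (M := V)) (Set.range v) := by
      rintro _ ⟨i, rfl⟩
      simp [hfv, hgw]
    exact LinearMap.eqOn_span heq hx'
  · intro x hx
    rw [affineSpan_convexHull] at hx
    have hx' := hspanw x hx
    have heq : Set.EqOn ⇑(f.comp g) ⇑(LinearMap.id (R := ℝ) (M := W)) (Set.range w) := by
      rintro _ ⟨i, rfl⟩
      simp [hfv, hgw]
    exact LinearMap.eqOn_span heq hx'

lemma permRep_apply {α : Type} [Fintype α] {H : Type} [Group H]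
    (π : H →* Equiv.Perm α) (g : H) :
    permRep π g = (permMat (π g)).mulVecLin := rfl

/-- Operator combination vanishes iff matrix combination vanishes. -/
lemma sum_smul_mulVecLin_eq_zero_iff {α : Type} [Fintype α]
    (M : G → Matrix α α ℝ) (l : G → ℝ) :
    (∑ g : G, l g • (M g).mulVecLin) = 0 ↔ (∑ g : G, l g • M g) = 0 := by
  have key : ∀ vv : α → ℝ, (∑ g : G, l g • (M g).mulVecLin) vv
      = Matrix.mulVec (∑ g : G, l g • M g) vv := by
    intro vv
    funext i
    simp only [LinearMap.sum_apply, LinearMap.smul_apply, Matrix.mulVecLin_apply,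
      Finset.sum_apply, Pi.smul_apply, Matrix.mulVec, dotProduct,
      Matrix.sum_apply, Matrix.smul_apply, smul_eq_mul, Finset.mul_sum,
      Finset.sum_mul]
    rw [Finset.sum_comm]
    exact Finset.sum_congr rfl fun y _ => Finset.sum_congr rfl fun x _ => by ring
  constructor
  · intro h0
    ext i j
    have h1 := congrFun (key (Pi.single j 1)) i
    rw [h0] at h1
    simpa using h1.symm
  · intro h0
    apply LinearMap.ext
    intro vv
    rw [key, h0]
    simp

/-- Transfer of fiberwise-sum conditions along compatible surjections. -/
lemma forall_fiber_iff {Q₁ Q₂ : Type} [DecidableEq Q₁] [DecidableEq Q₂] (q₁ : G → Q₁) (q₂ : G → Q₂)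
    (hsurj₁ : Function.Surjective q₁) (hsurj₂ : Function.Surjective q₂)
    (hcompat : ∀ g g' : G, q₂ g = q₂ g' ↔ q₁ g = q₁ g') (l : G → ℝ) :
    (∀ z : Q₁, ∑ g ∈ univ.filter (fun g => q₁ g = z), l g = 0) ↔
    (∀ z : Q₂, ∑ g ∈ univ.filter (fun g => q₂ g = z), l g = 0) := by
  constructor
  · intro h z
    obtain ⟨g₀, rfl⟩ := hsurj₂ z
    have heq : univ.filter (fun g => q₂ g = q₂ g₀) = univ.filter (fun g => q₁ g = q₁ g₀) := by
      apply Finset.filter_congr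
      intro g _
      simp [hcompat]
    rw [heq]
    exact h (q₁ g₀)
  · intro h z
    obtain ⟨g₀, rfl⟩ := hsurj₁ z
    have heq : univ.filter (fun g => q₁ g = q₁ g₀) = univ.filter (fun g => q₂ g = q₂ g₀) := by
      apply Finset.filter_congr
      intro g _
      simp [hcompat]
    rw [heq]
    exact h (q₂ g₀)

end AuxGeneric
section AuxGEx

/-- Generic two-coset-space permutation representation. -/
noncomputable def genPi (H K : Subgroup GEx) :
    GEx →* Equiv.Perm ((GEx ⧸ H) ⊕ (GEx ⧸ K)) :=
  (Equiv.Perm.sumCongrHom (GEx ⧸ H) (GEx ⧸ K)).comp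
    ((MulAction.toPermHom GEx (GEx ⧸ H)).prod (MulAction.toPermHom GEx (GEx ⧸ K)))

lemma genPi_apply_inl (H K : Subgroup GEx) (g : GEx) (x : GEx ⧸ H) :
    genPi H K g (Sum.inl x) = Sum.inl (g • x) := rfl

lemma genPi_apply_inr (H K : Subgroup GEx) (g : GEx) (x : GEx ⧸ K) :
    genPi H K g (Sum.inr x) = Sum.inr (g • x) := rfl

lemma piOne_eq : piOne = genPi subA subBC := rfl
lemma piTwo_eq : piTwo = genPi subB subAC := rfl

lemma smul_quot_eq_iff (H : Subgroup GEx) (a : GEx) (i j : GEx ⧸ H) :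
    i = a • j ↔ ((a : GEx ⧸ H) = i * j⁻¹) := by
  induction j using QuotientGroup.induction_on with
  | H h =>
    rw [MulAction.Quotient.smul_mk, smul_eq_mul, QuotientGroup.mk_mul]
    constructor
    · intro hh
      rw [hh, mul_inv_cancel_right]
    · intro hh
      rw [hh, inv_mul_cancel_right]

/-- Entrywise characterization of the vanishing of a combination of permutation
matrices of a two-coset-space representation. -/
lemma matrix_sum_eq_zero_iff (H K : Subgroup GEx) (u : GEx → GEx) (l : GEx → ℝ) :
    (∑ g : GEx, l g • permMat (genPi H K (u g))) = 0 ↔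
      ((∀ z : GEx ⧸ H, ∑ g ∈ univ.filter (fun g => ((u g : GEx ⧸ H)) = z), l g = 0) ∧
       (∀ z : GEx ⧸ K, ∑ g ∈ univ.filter (fun g => ((u g : GEx ⧸ K)) = z), l g = 0)) := by
  have keyH : ∀ i j : GEx ⧸ H,
      (∑ g : GEx, l g • permMat (genPi H K (u g))) (Sum.inl i) (Sum.inl j)
        = ∑ g ∈ univ.filter (fun g => ((u g : GEx ⧸ H)) = i * j⁻¹), l g := by
    intro i j
    rw [Matrix.sum_apply, Finset.sum_filter]
    · apply Finset.sum_congr rfl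
      intro g _
      simp only [Matrix.smul_apply, permMat, Matrix.of_apply, genPi_apply_inl,
        smul_eq_mul, mul_ite, mul_one, mul_zero]
      congr 1
      · have hiff := smul_quot_eq_iff H (u g) i j
        by_cases hc : ((u g : GEx ⧸ H)) = i * j⁻¹
        · have h1 : (Sum.inl i : (GEx ⧸ H) ⊕ (GEx ⧸ K)) = Sum.inl (u g • j) := by
            rw [Sum.inl.injEq]; exact hiff.mpr hc
          simp only [if_pos h1, if_pos hc, mul_one]
          convert mul_one (l g) using 2
          exact if_pos h1
        · have h1 : ¬ (Sum.inl i : (GEx ⧸ H) ⊕ (GEx ⧸ K)) = Sum.inl (u g • j) := by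
            rw [Sum.inl.injEq]; exact mt hiff.mp hc
          simp only [if_neg h1, if_neg hc, mul_zero]
          convert mul_zero (l g) using 2
          exact if_neg h1
  have keyK : ∀ i j : GEx ⧸ K,
      (∑ g : GEx, l g • permMat (genPi H K (u g))) (Sum.inr i) (Sum.inr j)
        = ∑ g ∈ univ.filter (fun g => ((u g : GEx ⧸ K)) = i * j⁻¹), l g := by
    intro i j
    rw [Matrix.sum_apply, Finset.sum_filter]
    · apply Finset.sum_congr rfl
      intro g _
      simp only [Matrix.smul_apply, permMat, Matrix.of_apply, genPi_apply_inr,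
        smul_eq_mul, mul_ite, mul_one, mul_zero]
      congr 1
      · have hiff := smul_quot_eq_iff K (u g) i j
        by_cases hc : ((u g : GEx ⧸ K)) = i * j⁻¹
        · have h1 : (Sum.inr i : (GEx ⧸ H) ⊕ (GEx ⧸ K)) = Sum.inr (u g • j) := by
            rw [Sum.inr.injEq]; exact hiff.mpr hc
          simp only [if_pos h1, if_pos hc, mul_one]
          convert mul_one (l g) using 2
          exact if_pos h1
        · have h1 : ¬ (Sum.inr i : (GEx ⧸ H) ⊕ (GEx ⧸ K)) = Sum.inr (u g • j) := by
            rw [Sum.inr.injEq]; exact mt hiff.mp hc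
          simp only [if_neg h1, if_neg hc, mul_zero]
          convert mul_zero (l g) using 2
          exact if_neg h1
  constructor
  · intro h0
    constructor
    · intro z
      have := keyH z 1
      rw [h0] at this
      simpa using this.symm
    · intro z
      have := keyK z 1
      rw [h0] at this
      simpa using this.symm
  · intro ⟨h1, h2⟩
    ext i j
    rcases i with i | i <;> rcases j with j | j
    · rw [keyH i j, h1 (i * j⁻¹)]; rfl
    · simp [Matrix.sum_apply, permMat, genPi_apply_inr]
    · simp [Matrix.sum_apply, permMat, genPi_apply_inl]
    · rw [keyK i j, h2 (i * j⁻¹)]; rfl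

end AuxGEx
section AuxSigma

lemma mem_toSubgroup {A : Type} [AddGroup A] (S : AddSubgroup A) (x : Multiplicative A) :
    x ∈ AddSubgroup.toSubgroup S ↔ x.toAdd ∈ S := Iff.rfl

lemma mem_subA_iff {g : GEx} : g ∈ subA ↔ g.toAdd.2 = 0 := by
  rw [subA, mem_toSubgroup, AddSubgroup.mem_prod]
  simp

lemma mem_subBC_iff {g : GEx} : g ∈ subBC ↔ g.toAdd.1 = 0 := by
  rw [subBC, mem_toSubgroup, AddSubgroup.mem_prod]
  simp

lemma mem_subB_iff {g : GEx} : g ∈ subB ↔ g.toAdd.1 = 0 ∧ g.toAdd.2.2 = 0 := by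
  rw [subB, mem_toSubgroup, AddSubgroup.mem_prod, AddSubgroup.mem_prod]
  simp

lemma mem_subAC_iff {g : GEx} : g ∈ subAC ↔ g.toAdd.2.1 = 0 := by
  rw [subAC, mem_toSubgroup, AddSubgroup.mem_prod, AddSubgroup.mem_prod]
  simp

/-- A bijection `ℤ/4 ≃ (ℤ/2)²`. -/
noncomputable def sEq : ZMod 4 ≃ (ZMod 2 × ZMod 2) :=
  Fintype.equivOfCardEq (by simp)

/-- The relabeling bijection of `G` matching the coset partitions of `A, B×C`
with those of `B, A×C`. -/
noncomputable def sigmaFun : GEx ≃ GEx where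
  toFun g := Multiplicative.ofAdd (sEq g.toAdd.2.1, (sEq.symm g.toAdd.1, g.toAdd.2.2))
  invFun g := Multiplicative.ofAdd (sEq g.toAdd.2.1, (sEq.symm g.toAdd.1, g.toAdd.2.2))
  left_inv g := by simp
  right_inv g := by simp

lemma quot_eq_iff (H : Subgroup GEx) (g g' : GEx) :
    ((g : GEx ⧸ H) = (g' : GEx ⧸ H)) ↔ g⁻¹ * g' ∈ H :=
  QuotientGroup.eq

lemma compat_AB (g g' : GEx) :
    ((sigmaFun g : GEx ⧸ subB) = (sigmaFun g' : GEx ⧸ subB)) ↔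
      ((g : GEx ⧸ subA) = (g' : GEx ⧸ subA)) := by
  rw [quot_eq_iff, quot_eq_iff, mem_subB_iff, mem_subA_iff]
  have h1 : ((sigmaFun g)⁻¹ * sigmaFun g').toAdd.1
      = -sEq g.toAdd.2.1 + sEq g'.toAdd.2.1 := rfl
  have h2 : ((sigmaFun g)⁻¹ * sigmaFun g').toAdd.2.2
      = -g.toAdd.2.2 + g'.toAdd.2.2 := rfl
  have h3 : (g⁻¹ * g').toAdd.2 = -g.toAdd.2 + g'.toAdd.2 := rfl
  rw [h1, h2, h3, neg_add_eq_zero, neg_add_eq_zero, neg_add_eq_zero,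
    EmbeddingLike.apply_eq_iff_eq, Prod.ext_iff]

lemma compat_BCAC (g g' : GEx) :
    ((sigmaFun g : GEx ⧸ subAC) = (sigmaFun g' : GEx ⧸ subAC)) ↔
      ((g : GEx ⧸ subBC) = (g' : GEx ⧸ subBC)) := by
  rw [quot_eq_iff, quot_eq_iff, mem_subAC_iff, mem_subBC_iff]
  have h1 : ((sigmaFun g)⁻¹ * sigmaFun g').toAdd.2.1
      = -sEq.symm g.toAdd.1 + sEq.symm g'.toAdd.1 := rfl
  have h3 : (g⁻¹ * g').toAdd.1 = -g.toAdd.1 + g'.toAdd.1 := rfl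
  rw [h1, h3, neg_add_eq_zero, neg_add_eq_zero, EmbeddingLike.apply_eq_iff_eq]

end AuxSigma
section AuxParts

lemma genPi_injective (H K : Subgroup GEx)
    (h : ∀ g : GEx, g ∈ H → g ∈ K → g = 1) : Function.Injective (genPi H K) := by
  rw [injective_iff_map_eq_one]
  intro g hg
  have h1 : genPi H K g (Sum.inl ((1 : GEx) : GEx ⧸ H)) = Sum.inl ((1 : GEx) : GEx ⧸ H) := by
    rw [hg]; rfl
  have h2 : genPi H K g (Sum.inr ((1 : GEx) : GEx ⧸ K)) = Sum.inr ((1 : GEx) : GEx ⧸ K) := by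
    rw [hg]; rfl
  rw [genPi_apply_inl, MulAction.Quotient.smul_mk, Sum.inl.injEq] at h1
  rw [genPi_apply_inr, MulAction.Quotient.smul_mk, Sum.inr.injEq] at h2
  apply h g
  · rw [← QuotientGroup.eq_one_iff]
    simpa using h1
  · rw [← QuotientGroup.eq_one_iff]
    simpa using h2

lemma piOne_injective : Function.Injective piOne := by
  rw [piOne_eq]
  apply genPi_injective
  intro g h1 h2
  rw [mem_subA_iff] at h1
  rw [mem_subBC_iff] at h2
  have : g.toAdd = 0 := Prod.ext h2 h1
  have h3 : g = Multiplicative.ofAdd 0 := congrArg Multiplicative.ofAdd this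
  simpa using h3

lemma piTwo_injective : Function.Injective piTwo := by
  rw [piTwo_eq]
  apply genPi_injective
  intro g h1 h2
  rw [mem_subB_iff] at h1
  rw [mem_subAC_iff] at h2
  have : g.toAdd = 0 := Prod.ext h1.1 (Prod.ext h2 h1.2)
  have h3 : g = Multiplicative.ofAdd 0 := congrArg Multiplicative.ofAdd this
  simpa using h3

lemma part_three :
    AffinelyEquivalent
      (convexHull ℝ (Set.range fun g : GEx => permMat (piOne g)))
      (convexHull ℝ (Set.range fun g : GEx => permMat (piTwo g))) := by
  have hrange : (Set.range fun g : GEx => permMat (piTwo g))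
      = Set.range fun g : GEx => permMat (piTwo (sigmaFun g)) := by
    exact (Function.Surjective.range_comp sigmaFun.surjective
      (fun g : GEx => permMat (piTwo g))).symm
  rw [hrange]
  apply affinelyEquivalent_of_ker_eq
  intro c
  rw [piOne_eq, piTwo_eq]
  rw [matrix_sum_eq_zero_iff subA subBC (fun g => g) c,
    matrix_sum_eq_zero_iff subB subAC (fun g => sigmaFun g) c]
  constructor
  · rintro ⟨hA, hBC⟩
    constructor
    · exact (forall_fiber_iff (fun g : GEx => ((g : GEx ⧸ subA)))
        (fun g => ((sigmaFun g : GEx ⧸ subB)))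
        (QuotientGroup.mk_surjective)
        (QuotientGroup.mk_surjective.comp sigmaFun.surjective)
        compat_AB c).1 hA
    · exact (forall_fiber_iff (fun g : GEx => ((g : GEx ⧸ subBC)))
        (fun g => ((sigmaFun g : GEx ⧸ subAC)))
        (QuotientGroup.mk_surjective)
        (QuotientGroup.mk_surjective.comp sigmaFun.surjective)
        compat_BCAC c).1 hBC
  · rintro ⟨hB, hAC⟩
    constructor
    · exact (forall_fiber_iff (fun g : GEx => ((g : GEx ⧸ subA)))
        (fun g => ((sigmaFun g : GEx ⧸ subB)))
        (QuotientGroup.mk_surjective)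
        (QuotientGroup.mk_surjective.comp sigmaFun.surjective)
        compat_AB c).2 hB
    · exact (forall_fiber_iff (fun g : GEx => ((g : GEx ⧸ subBC)))
        (fun g => ((sigmaFun g : GEx ⧸ subAC)))
        (QuotientGroup.mk_surjective)
        (QuotientGroup.mk_surjective.comp sigmaFun.surjective)
        compat_BCAC c).2 hAC

end AuxParts
section AuxChi

noncomputable def zeta4 : ℂ := Complex.exp (2 * Real.pi * Complex.I / 4)
noncomputable def zeta3 : ℂ := Complex.exp (2 * Real.pi * Complex.I / 3)

lemma zeta4_prim : IsPrimitiveRoot zeta4 4 := by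
  have := Complex.isPrimitiveRoot_exp 4 (by norm_num)
  simpa [zeta4] using this

lemma zeta3_prim : IsPrimitiveRoot zeta3 3 := by
  have := Complex.isPrimitiveRoot_exp 3 (by norm_num)
  simpa [zeta3] using this

/-- An order-12 character of `G`, trivial exactly on `A`. -/
noncomputable def chi (g : GEx) : ℂ :=
  zeta4 ^ (g.toAdd.2.1.val) * zeta3 ^ (g.toAdd.2.2.val)

lemma pow_mod_eq {ζ : ℂ} {n : ℕ} (h : ζ ^ n = 1) (k : ℕ) : ζ ^ (k % n) = ζ ^ k := by
  conv_rhs => rw [← Nat.div_add_mod k n]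
  rw [pow_add, pow_mul, h, one_pow, one_mul]

lemma chi_mul (g h : GEx) : chi (g * h) = chi g * chi h := by
  unfold chi
  have e1 : (g * h).toAdd.2.1 = g.toAdd.2.1 + h.toAdd.2.1 := rfl
  have e2 : (g * h).toAdd.2.2 = g.toAdd.2.2 + h.toAdd.2.2 := rfl
  rw [e1, e2, ZMod.val_add, ZMod.val_add,
    pow_mod_eq (zeta4_prim.pow_eq_one) _, pow_mod_eq (zeta3_prim.pow_eq_one) _,
    pow_add, pow_add]
  ring

lemma chi_eq_one {g : GEx} (h : chi g = 1) : g.toAdd.2.1 = 0 ∧ g.toAdd.2.2 = 0 := by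
  unfold chi at h
  have h4 : (zeta4 ^ g.toAdd.2.1.val) ^ 4 = 1 := by
    rw [← pow_mul, mul_comm, pow_mul, zeta4_prim.pow_eq_one, one_pow]
  have hc : zeta3 ^ (g.toAdd.2.2.val * 4) = 1 := by
    have := congrArg (fun t => t ^ 4) h
    simp only [mul_pow, one_pow, h4, one_mul] at this
    rw [pow_mul]
    exact this
  have hdvd : 3 ∣ g.toAdd.2.2.val * 4 := zeta3_prim.dvd_of_pow_eq_one _ hc
  have hlt : g.toAdd.2.2.val < 3 := ZMod.val_lt _
  have hc0 : g.toAdd.2.2.val = 0 := by omega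
  have hczero : g.toAdd.2.2 = 0 := by
    rwa [← ZMod.val_eq_zero]
  have hb : zeta4 ^ g.toAdd.2.1.val = 1 := by
    rw [hc0, pow_zero, mul_one] at h
    exact h
  have hdvd4 : 4 ∣ g.toAdd.2.1.val := zeta4_prim.dvd_of_pow_eq_one _ hb
  have hlt4 : g.toAdd.2.1.val < 4 := ZMod.val_lt _
  have hb0 : g.toAdd.2.1.val = 0 := by omega
  have hbzero : g.toAdd.2.1 = 0 := by rwa [← ZMod.val_eq_zero]
  exact ⟨hbzero, hczero⟩

lemma sq_eq_one_of_chi_eq_one {g : GEx} (h : chi g = 1) : g * g = 1 := by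
  obtain ⟨hb, hc⟩ := chi_eq_one h
  have key : g.toAdd + g.toAdd = 0 := by
    have h2 : ∀ y : ZMod 2 × ZMod 2, y + y = 0 := by decide
    refine Prod.ext (h2 _) (Prod.ext ?_ ?_)
    · show g.toAdd.2.1 + g.toAdd.2.1 = 0
      rw [hb, add_zero]
    · show g.toAdd.2.2 + g.toAdd.2.2 = 0
      rw [hc, add_zero]
  have : (g * g).toAdd = (1 : GEx).toAdd := key
  exact Multiplicative.toAdd.injective this

lemma chi_of_mem_subA {g : GEx} (h : g ∈ subA) : chi g = 1 := by
  rw [mem_subA_iff] at h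
  unfold chi
  rw [show g.toAdd.2.1 = 0 from by rw [h]; rfl, show g.toAdd.2.2 = 0 from by rw [h]; rfl]
  simp [ZMod.val_zero]

/-- Sum of a nontrivial character over a translation-invariant finite set vanishes. -/
lemma sum_chi_eq_zero {s : Finset GEx} (x : GEx) (hx : chi x ≠ 1)
    (hs : ∀ g : GEx, g ∈ s ↔ g * x ∈ s) :
    ∑ g ∈ s, chi g = 0 := by
  have key : ∑ g ∈ s, chi (g * x) = ∑ g ∈ s, chi g := by
    apply Finset.sum_equiv (Equiv.mulRight x)
    · intro g
      simpa using hs g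
    · intro g _
      rfl
  have key2 : (∑ g ∈ s, chi g) * chi x = ∑ g ∈ s, chi g := by
    calc (∑ g ∈ s, chi g) * chi x = ∑ g ∈ s, chi (g * x) := by
          rw [Finset.sum_mul]
          exact Finset.sum_congr rfl fun g _ => (chi_mul g x).symm
      _ = ∑ g ∈ s, chi g := key
  by_contra hS
  apply hx
  have := mul_left_cancel₀ hS (key2.trans (mul_one _).symm)
  exact this

end AuxChi
section AuxFour

/-- Stable equivalence forces inclusion of affine kernels. -/
lemma affKer_sub_of_repIso {V V' W W' : Type}
    [AddCommGroup V] [Module ℝ V] [AddCommGroup V'] [Module ℝ V']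
    [AddCommGroup W] [Module ℝ W] [AddCommGroup W'] [Module ℝ W']
    (ρ₁ : Representation ℝ G V) (ρ₁' : Representation ℝ G V')
    (ρ₂ : Representation ℝ G W) (ρ₂' : Representation ℝ G W')
    (h₂ : affKer ρ₂ ⊆ affKer ρ₂')
    (e : (V × V') ≃ₗ[ℝ] (W × W'))
    (he : ∀ (g : G) (x : V × V'), e (prodRep ρ₁ ρ₁' g x) = prodRep ρ₂ ρ₂' g (e x)) :
    affKer ρ₂ ⊆ affKer ρ₁ := by
  rintro l ⟨hop2, hsum⟩
  obtain ⟨hop2', -⟩ := h₂ ⟨hop2, hsum⟩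
  refine ⟨?_, hsum⟩
  have hbig2 : ∀ y : W × W',
      (∑ g : G, l g • (prodRep ρ₂ ρ₂' g : (W × W') →ₗ[ℝ] (W × W'))) y = 0 := by
    intro y
    have c1 : (∑ g : G, l g • (ρ₂ g : W →ₗ[ℝ] W)) y.1 = 0 := by rw [hop2]; rfl
    have c2 : (∑ g : G, l g • (ρ₂' g : W' →ₗ[ℝ] W')) y.2 = 0 := by rw [hop2']; rfl
    simp only [LinearMap.sum_apply, LinearMap.smul_apply] at c1 c2 ⊢
    apply Prod.ext
    · rw [Prod.fst_sum]
      simpa [prodRep, Prod.smul_fst] using c1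
    · rw [Prod.snd_sum]
      simpa [prodRep, Prod.smul_snd] using c2
  have hbig1 : ∀ x : V × V',
      (∑ g : G, l g • (prodRep ρ₁ ρ₁' g : (V × V') →ₗ[ℝ] (V × V'))) x = 0 := by
    intro x
    apply e.injective
    rw [map_zero]
    have : e ((∑ g : G, l g • (prodRep ρ₁ ρ₁' g : (V × V') →ₗ[ℝ] (V × V'))) x)
        = (∑ g : G, l g • (prodRep ρ₂ ρ₂' g : (W × W') →ₗ[ℝ] (W × W'))) (e x) := by
      simp only [LinearMap.sum_apply, LinearMap.smul_apply, map_sum, map_smul]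
      exact Finset.sum_congr rfl fun g _ => congrArg _ (he g x)
    rw [this, hbig2]
  apply LinearMap.ext
  intro v
  have h0 := hbig1 (v, 0)
  have h1 := congrArg Prod.fst h0
  simp only [LinearMap.sum_apply, LinearMap.smul_apply, Prod.fst_sum,
    Prod.smul_fst, prodRep] at h1 ⊢
  simpa [prodRep] using h1

def eB : GEx := Multiplicative.ofAdd (((0 : ZMod 2), (0 : ZMod 2)), ((1 : ZMod 4), (0 : ZMod 3)))
def eC : GEx := Multiplicative.ofAdd (((0 : ZMod 2), (0 : ZMod 2)), ((0 : ZMod 4), (1 : ZMod 3)))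

lemma eB_mem : eB ∈ subB := by
  rw [mem_subB_iff]
  exact ⟨rfl, rfl⟩

lemma eC_mem : eC ∈ subAC := by
  rw [mem_subAC_iff]
  rfl

lemma chi_eB : chi eB = zeta4 := by
  unfold chi eB
  simp [show ZMod.val (1 : ZMod 4) = 1 from rfl, show ZMod.val (0 : ZMod 3) = 0 from rfl]

lemma chi_eB_ne_one : chi eB ≠ 1 := by
  rw [chi_eB]
  exact zeta4_prim.ne_one (by norm_num)

lemma chi_symm_eB_ne_one (φ : GEx ≃* GEx) : chi (φ.symm eB) ≠ 1 := by
  intro h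
  have h2 : φ.symm eB * φ.symm eB = 1 := sq_eq_one_of_chi_eq_one h
  have h3 : eB * eB = 1 := by
    have := congrArg φ h2
    rwa [map_mul, map_one, MulEquiv.apply_symm_apply] at this
  have h4 : (eB * eB).toAdd.2.1 = (0 : ZMod 4) := by rw [h3]; rfl
  exact absurd h4 (by decide)

lemma chi_symm_eC_ne_one (φ : GEx ≃* GEx) : chi (φ.symm eC) ≠ 1 := by
  intro h
  have h2 : φ.symm eC * φ.symm eC = 1 := sq_eq_one_of_chi_eq_one h
  have h3 : φ.symm eC * φ.symm eC * φ.symm eC = 1 := by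
    have hcube : eC * eC * eC = 1 := by decide
    have := congrArg φ.symm hcube
    rwa [map_mul, map_mul, map_one] at this
  have hy : φ.symm eC = 1 := by
    rw [h2, one_mul] at h3
    exact h3
  have : eC = 1 := by
    have := congrArg φ hy
    rwa [MulEquiv.apply_symm_apply, map_one] at this
  exact absurd this (by decide)

end AuxFour
section PartFour

lemma part_four :
    ¬ ∃ φ : GEx ≃* GEx,
        StablyEquivalent (permRep piOne) ((permRep piTwo).comp φ.toMonoidHom) := by
  rintro ⟨φ, V', iV'1, iV'2, ρ₁', W', iW'1, iW'2, ρ₂', h₁, h₂, e, he⟩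
  have hsub : affKer ((permRep piTwo).comp φ.toMonoidHom) ⊆ affKer (permRep piOne) :=
    affKer_sub_of_repIso (permRep piOne) ρ₁' ((permRep piTwo).comp φ.toMonoidHom) ρ₂' h₂ e he
  -- complex fiber sums for the second representation vanish
  have hfibB : ∀ z : GEx ⧸ subB,
      ∑ g ∈ univ.filter (fun g : GEx => ((φ g : GEx ⧸ subB)) = z), chi g = 0 := by
    intro z
    apply sum_chi_eq_zero (φ.symm eB) (chi_symm_eB_ne_one φ)
    intro g
    simp only [Finset.mem_filter, Finset.mem_univ, true_and]
    have hq : ((φ (g * φ.symm eB) : GEx ⧸ subB)) = ((φ g : GEx ⧸ subB)) := by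
      rw [map_mul, MulEquiv.apply_symm_apply]
      exact QuotientGroup.mk_mul_of_mem (φ g) eB_mem
    rw [hq]
  have hfibAC : ∀ z : GEx ⧸ subAC,
      ∑ g ∈ univ.filter (fun g : GEx => ((φ g : GEx ⧸ subAC)) = z), chi g = 0 := by
    intro z
    apply sum_chi_eq_zero (φ.symm eC) (chi_symm_eC_ne_one φ)
    intro g
    simp only [Finset.mem_filter, Finset.mem_univ, true_and]
    have hq : ((φ (g * φ.symm eC) : GEx ⧸ subAC)) = ((φ g : GEx ⧸ subAC)) := by
      rw [map_mul, MulEquiv.apply_symm_apply]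
      exact QuotientGroup.mk_mul_of_mem (φ g) eC_mem
    rw [hq]
  have huniv : ∑ g : GEx, chi g = 0 := by
    apply sum_chi_eq_zero eB chi_eB_ne_one
    intro g
    simp
  -- membership of real and imaginary parts in the affine kernel of the second rep
  have hmemtwo : ∀ l : GEx → ℝ,
      (∀ z : GEx ⧸ subB, ∑ g ∈ univ.filter (fun g : GEx => ((φ g : GEx ⧸ subB)) = z), l g = 0) →
      (∀ z : GEx ⧸ subAC, ∑ g ∈ univ.filter (fun g : GEx => ((φ g : GEx ⧸ subAC)) = z), l g = 0) →
      (∑ g : GEx, l g = 0) →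
      l ∈ affKer ((permRep piTwo).comp φ.toMonoidHom) := by
    intro l hB hAC hsum
    refine ⟨?_, hsum⟩
    have hrfl : (∑ g : GEx, l g • (((permRep piTwo).comp φ.toMonoidHom) g :
          ((GEx ⧸ subB ⊕ GEx ⧸ subAC) → ℝ) →ₗ[ℝ] ((GEx ⧸ subB ⊕ GEx ⧸ subAC) → ℝ)))
        = ∑ g : GEx, l g • (permMat (genPi subB subAC ((fun g : GEx => φ g) g))).mulVecLin := rfl
    rw [hrfl, sum_smul_mulVecLin_eq_zero_iff,
      matrix_sum_eq_zero_iff subB subAC (fun g : GEx => φ g) l]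
    exact ⟨hB, hAC⟩
  have hre2 : (fun g : GEx => (chi g).re) ∈ affKer ((permRep piTwo).comp φ.toMonoidHom) := by
    apply hmemtwo
    · intro z
      have h' := congrArg Complex.re (hfibB z)
      simpa [Complex.re_sum] using h'
    · intro z
      have h' := congrArg Complex.re (hfibAC z)
      simpa [Complex.re_sum] using h'
    · have h' := congrArg Complex.re huniv
      simpa [Complex.re_sum] using h'
  have him2 : (fun g : GEx => (chi g).im) ∈ affKer ((permRep piTwo).comp φ.toMonoidHom) := by
    apply hmemtwo
    · intro z
      have h' := congrArg Complex.im (hfibB z)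
      simpa [Complex.im_sum] using h'
    · intro z
      have h' := congrArg Complex.im (hfibAC z)
      simpa [Complex.im_sum] using h'
    · have h' := congrArg Complex.im huniv
      simpa [Complex.im_sum] using h'
  -- push into the affine kernel of the first rep and extract A-fiber conditions
  have extract : ∀ l : GEx → ℝ, l ∈ affKer (permRep piOne) →
      ∀ z : GEx ⧸ subA, ∑ g ∈ univ.filter (fun g : GEx => ((g : GEx ⧸ subA)) = z), l g = 0 := by
    intro l hl
    obtain ⟨hop, -⟩ := hl
    have hop' : (∑ g : GEx, l g •
        (permMat (genPi subA subBC ((fun g : GEx => g) g))).mulVecLin) = 0 := hop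
    rw [sum_smul_mulVecLin_eq_zero_iff,
      matrix_sum_eq_zero_iff subA subBC (fun g : GEx => g) l] at hop'
    exact hop'.1
  have hre1 := extract _ (hsub hre2) (1 : GEx ⧸ subA)
  have him1 := extract _ (hsub him2) (1 : GEx ⧸ subA)
  -- the contradiction: `chi` is identically 1 on the fiber over `1`
  have key : ∀ F : Finset GEx, (1 : GEx) ∈ F → (∀ g ∈ F, chi g = 1) →
      (∑ g ∈ F, (chi g).re) = 0 → (∑ g ∈ F, (chi g).im) = 0 → False := by
    intro F h1 hone hre him
    have hc : ∑ g ∈ F, chi g = 0 := by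
      apply Complex.ext
      · simpa [Complex.re_sum] using hre
      · simpa [Complex.im_sum] using him
    rw [Finset.sum_congr rfl hone, Finset.sum_const, nsmul_eq_mul, mul_one] at hc
    have hzero : F.card = 0 := by exact_mod_cast hc
    rw [Finset.card_eq_zero] at hzero
    rw [hzero] at h1
    exact absurd h1 (Finset.notMem_empty 1)
  apply key (univ.filter (fun g : GEx => ((g : GEx ⧸ subA)) = (1 : GEx ⧸ subA)))
  · simp only [Finset.mem_filter, Finset.mem_univ, true_and]
    rfl
  · intro g hg
    rw [Finset.mem_filter] at hg
    exact chi_of_mem_subA ((QuotientGroup.eq_one_iff g).mp hg.2)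
  · exact hre1
  · exact him1

end PartFour

/-- The example. Both `π₁` and `π₂` are faithful, the permutation
polytopes `P(π₁)` and `P(π₂)` are affinely equivalent, but `(G, π₁)` and `(G, π₂)`
are not effectively equivalent: no automorphism `φ` of `G` makes `Π₁` and `Π₂ ∘ φ`
stably equivalent. -/
theorem example_affinelyEquivalent_but_not_effectivelyEquivalent :
    Function.Injective piOne ∧ Function.Injective piTwo ∧
    AffinelyEquivalent
      (convexHull ℝ (Set.range fun g : GEx => permMat (piOne g)))
      (convexHull ℝ (Set.range fun g : GEx => permMat (piTwo g))) ∧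
    ¬ ∃ φ : GEx ≃* GEx,
        StablyEquivalent (permRep piOne) ((permRep piTwo).comp φ.toMonoidHom) :=
  ⟨piOne_injective, piTwo_injective, part_three, part_four⟩
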